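/- Let P and P̃ be cubic splines interpolating the same nodes and values {(x_i, f_i)} but with endpoint derivative data ḟ_1, ḟ_n and ḟ̃_1, ḟ̃_n respectively (interior derivatives computed from the tridiagonal spline system). Then for 2 ≤ i ≤ n−2 and all x ∈ [x_i, x_{i+1}], |P_i(x) − P̃_i(x)| ≤ 8 h_i (2^{−i} λ_1 |ḟ̃_1 − ḟ_1| + 2^{i−n} μ_{n−2} |ḟ̃_n − ḟ_n|). -/

import Mathlib

private lemma interior_contra (p q P Q M : ℝ) (hM : 0 < M)
    (hstep : 2 * (8/3 * (P + Q) + M) ≤ p * (8/3 * (2*P + 1/2*Q) + M) + q * (8/3*(1/2*P + 2*Q) + M))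
    (h1 : p*M + q*M = M) (h2 : p*P + q*P = P) (h3 : p*Q + q*Q = Q)
    (n1 : 0 ≤ q*P) (n2 : 0 ≤ p*Q) : False := by
  linarith only [hstep, h1, h2, h3, n1, n2, hM]

lemma tridiag_decay (n : ℕ) (hn : 5 ≤ n) (lam mu e : ℕ → ℝ)
    (hlm : ∀ j, 1 ≤ j → j + 2 ≤ n → 0 ≤ lam j ∧ 0 ≤ mu j ∧ lam j + mu j = 1)
    (heq : ∀ k, 2 ≤ k → k ≤ n - 1 →
      lam (k - 1) * e (k - 1) + 2 * e k + mu (k - 1) * e (k + 1) = 0) :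
    ∀ i, 2 ≤ i → i ≤ n - 1 →
      |e i| ≤ (8/3) * ((2:ℝ) ^ (-(i:ℤ)) * (lam 1 * |e 1|)
        + (2:ℝ) ^ ((i:ℤ) - (n:ℤ)) * (mu (n - 2) * |e n|)) := by
  have hL0 : 0 ≤ lam 1 * |e 1| := mul_nonneg (hlm 1 le_rfl (by omega)).1 (abs_nonneg _)
  have hR0 : 0 ≤ mu (n - 2) * |e n| :=
    mul_nonneg (hlm (n - 2) (by omega) (by omega)).2.1 (abs_nonneg _)
  set L := lam 1 * |e 1| with hLdef
  set R := mu (n - 2) * |e n| with hRdef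
  set c : ℕ → ℝ := fun j => (8/3) * ((2:ℝ) ^ (-(j:ℤ)) * L + (2:ℝ) ^ ((j:ℤ) - (n:ℤ)) * R)
    with hcdef
  have hc0 : ∀ j, 0 ≤ c j := by
    intro j
    have p1 : (0:ℝ) < (2:ℝ) ^ (-(j:ℤ)) := zpow_pos (by norm_num) _
    have p2 : (0:ℝ) < (2:ℝ) ^ ((j:ℤ) - (n:ℤ)) := zpow_pos (by norm_num) _
    have := mul_nonneg p1.le hL0
    have := mul_nonneg p2.le hR0
    simp only [hcdef]
    nlinarith
  obtain ⟨i0, hi0m, hmax⟩ := Finset.exists_max_image (Finset.Icc 2 (n-1))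
    (fun j => |e j| - c j) ⟨2, Finset.mem_Icc.mpr ⟨le_rfl, by omega⟩⟩
  rw [Finset.mem_Icc] at hi0m
  set M := |e i0| - c i0 with hMdef
  have hM : M ≤ 0 := by
    by_contra hM
    push_neg at hM
    obtain ⟨h20, hn0⟩ := hi0m
    obtain ⟨lam0, mu0, sum1⟩ := hlm (i0 - 1) (by omega) (by omega)
    have hEq := heq i0 h20 hn0
    have habs : 2 * |e i0| ≤ lam (i0-1) * |e (i0-1)| + mu (i0-1) * |e (i0+1)| := by
      have h2e : |2 * e i0| = |lam (i0-1) * e (i0-1) + mu (i0-1) * e (i0+1)| := by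
        rw [show lam (i0-1) * e (i0-1) + mu (i0-1) * e (i0+1) = -(2 * e i0) by linarith,
          abs_neg]
      calc 2 * |e i0| = |2 * e i0| := by rw [abs_mul, abs_two]
        _ = |lam (i0-1) * e (i0-1) + mu (i0-1) * e (i0+1)| := h2e
        _ ≤ |lam (i0-1) * e (i0-1)| + |mu (i0-1) * e (i0+1)| := abs_add_le _ _
        _ = lam (i0-1) * |e (i0-1)| + mu (i0-1) * |e (i0+1)| := by
            rw [abs_mul, abs_mul, abs_of_nonneg lam0, abs_of_nonneg mu0]
    rcases eq_or_lt_of_le h20 with h2 | h2'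
    · -- i0 = 2
      have hi02 : i0 = 2 := h2.symm
      subst hi02
      have h3m := hmax 3 (Finset.mem_Icc.mpr ⟨by omega, by omega⟩)
      have hc2 : c 2 = (8/3) * ((1/4) * L + (2:ℝ) ^ ((2:ℤ) - (n:ℤ)) * R) := by
        simp only [hcdef]; norm_num
      have hc3 : c 3 = (8/3) * ((1/8) * L + 2 * ((2:ℝ) ^ ((2:ℤ) - (n:ℤ)) * R)) := by
        simp only [hcdef]
        have : (2:ℝ) ^ ((3:ℤ) - (n:ℤ)) = 2 * (2:ℝ) ^ ((2:ℤ) - (n:ℤ)) := by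
          rw [show (3:ℤ) - (n:ℤ) = 1 + ((2:ℤ) - (n:ℤ)) by ring, zpow_add₀ (two_ne_zero),
            zpow_one]
        push_cast
        rw [this]
        norm_num
        ring
      have hmu1 : mu 1 ≤ 1 := by linarith
      have hb3 : mu 1 * |e 3| ≤ c 3 + M := by
        have : mu 1 * |e 3| ≤ 1 * |e 3| := by
          apply mul_le_mul_of_nonneg_right _ (abs_nonneg _)
          simpa using hmu1
        have h3 : |e 3| ≤ c 3 + M := by linarith
        linarith
      have : 2 * (c 2 + M) ≤ L + (c 3 + M) := by
        have hE2 : |e 2| = c 2 + M := by rw [hMdef]; ring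
        simp only [show (2:ℕ) - 1 = 1 from rfl] at habs
        calc 2 * (c 2 + M) = 2 * |e 2| := by rw [hE2]
          _ ≤ lam 1 * |e 1| + mu 1 * |e 3| := habs
          _ ≤ L + (c 3 + M) := by rw [hLdef]; linarith
      rw [hc2, hc3] at this
      have hRpos : 0 ≤ (2:ℝ) ^ ((2:ℤ) - (n:ℤ)) * R :=
        mul_nonneg (zpow_pos (by norm_num : (0:ℝ) < 2) _).le hR0
      linarith
    · rcases eq_or_lt_of_le hn0 with hn' | hn''
      · -- i0 = n - 1
        have hprev := hmax (n-2) (Finset.mem_Icc.mpr ⟨by omega, by omega⟩)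
        have hi1 : i0 - 1 = n - 2 := by omega
        have hi2 : i0 + 1 = n := by omega
        rw [hi1, hi2] at habs
        set W := (2:ℝ) ^ (-(n:ℤ)) with hWdef
        have hW0 : 0 < W := zpow_pos (by norm_num) _
        have hcn1 : c (n-1) = (8/3) * (2 * W * L + (1/2) * R) := by
          simp only [hcdef]
          have e1 : ((n-1:ℕ):ℤ) = (n:ℤ) - 1 := by omega
          rw [e1, show -((n:ℤ)-1) = 1 + -(n:ℤ) by ring, zpow_add₀ (two_ne_zero),
            show (n:ℤ) - 1 - (n:ℤ) = -1 by ring]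
          norm_num [hWdef]
        have hcn2 : c (n-2) = (8/3) * (4 * W * L + (1/4) * R) := by
          simp only [hcdef]
          have e1 : ((n-2:ℕ):ℤ) = (n:ℤ) - 2 := by omega
          rw [e1, show -((n:ℤ)-2) = 2 + -(n:ℤ) by ring, zpow_add₀ (two_ne_zero),
            show (n:ℤ) - 2 - (n:ℤ) = -2 by ring]
          norm_num [hWdef]
        have hlam1 : lam (n-2) ≤ 1 := by
          have : i0 - 1 = n - 2 := hi1
          rw [← this]; linarith
        have hbprev : lam (n-2) * |e (n-2)| ≤ c (n-2) + M := by
          have h1 : |e (n-2)| ≤ c (n-2) + M := by linarith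
          have h2 : lam (n-2) * |e (n-2)| ≤ 1 * |e (n-2)| := by
            apply mul_le_mul_of_nonneg_right _ (abs_nonneg _)
            simpa using hlam1
          have h3 : 0 ≤ |e (n-2)| := abs_nonneg _
          linarith
      
        have hEn : mu (n-2) * |e n| = R := hRdef.symm
        have hstep : 2 * (c (n-1) + M) ≤ (c (n-2) + M) + R := by
          have hE : |e i0| = c i0 + M := by rw [hMdef]; ring
          have : i0 = n - 1 := by omega
          subst this
          calc 2 * (c (n-1) + M) = 2 * |e (n-1)| := by rw [hE]
            _ ≤ lam (n-2) * |e (n-2)| + mu (n-2) * |e n| := habs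
            _ ≤ (c (n-2) + M) + R := by rw [hEn] at *; linarith
        rw [hcn1, hcn2] at hstep
        have hWL : 0 ≤ W * L := mul_nonneg hW0.le hL0
        linarith
      · -- interior: 3 ≤ i0 ≤ n - 2
        have hil : 3 ≤ i0 := by omega
        have hir : i0 ≤ n - 2 := by omega
        have hprev := hmax (i0-1) (Finset.mem_Icc.mpr ⟨by omega, by omega⟩)
        have hnext := hmax (i0+1) (Finset.mem_Icc.mpr ⟨by omega, by omega⟩)
        set A := (2:ℝ) ^ (-(i0:ℤ)) with hAdef
        set B := (2:ℝ) ^ ((i0:ℤ) - (n:ℤ)) with hBdef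
        have hA0 : 0 < A := zpow_pos (by norm_num) _
        have hB0 : 0 < B := zpow_pos (by norm_num) _
        have hci : c i0 = (8/3) * (A * L + B * R) := by simp only [hcdef]; rw [hAdef, hBdef]
        have hcm : c (i0-1) = (8/3) * (2 * A * L + (1/2) * B * R) := by
          simp only [hcdef]
          have e1 : ((i0-1:ℕ):ℤ) = (i0:ℤ) - 1 := by omega
          rw [e1, show -((i0:ℤ)-1) = 1 + -(i0:ℤ) by ring, zpow_add₀ (two_ne_zero),
            show (i0:ℤ) - 1 - (n:ℤ) = -1 + ((i0:ℤ) - (n:ℤ)) by ring,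
            zpow_add₀ (two_ne_zero)]
          rw [hAdef, hBdef]
          norm_num
        have hcp : c (i0+1) = (8/3) * ((1/2) * A * L + 2 * B * R) := by
          simp only [hcdef]
          have e1 : ((i0+1:ℕ):ℤ) = (i0:ℤ) + 1 := by omega
          rw [e1, show -((i0:ℤ)+1) = -1 + -(i0:ℤ) by ring, zpow_add₀ (two_ne_zero),
            show (i0:ℤ) + 1 - (n:ℤ) = 1 + ((i0:ℤ) - (n:ℤ)) by ring,
            zpow_add₀ (two_ne_zero)]
          rw [hAdef, hBdef]
          norm_num
        have hbp : |e (i0-1)| ≤ c (i0-1) + M := by linarith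
        have hbn : |e (i0+1)| ≤ c (i0+1) + M := by linarith
        have hE : |e i0| = c i0 + M := by rw [hMdef]; ring
        have hstep : 2 * (c i0 + M) ≤ lam (i0-1) * (c (i0-1) + M) + mu (i0-1) * (c (i0+1) + M) := by
          rw [← hE]
          calc 2 * |e i0| ≤ lam (i0-1) * |e (i0-1)| + mu (i0-1) * |e (i0+1)| := habs
            _ ≤ lam (i0-1) * (c (i0-1) + M) + mu (i0-1) * (c (i0+1) + M) := by
                exact add_le_add (mul_le_mul_of_nonneg_left hbp lam0)
                  (mul_le_mul_of_nonneg_left hbn mu0)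
        rw [hci, hcm, hcp] at hstep
        have hMsum : lam (i0-1) * M + mu (i0-1) * M = M := by
          linear_combination M * sum1
        have hPsum : lam (i0-1) * (A*L) + mu (i0-1) * (A*L) = A*L := by
          linear_combination (A*L) * sum1
        have hQsum : lam (i0-1) * (B*R) + mu (i0-1) * (B*R) = B*R := by
          linear_combination (B*R) * sum1
        have n1 : 0 ≤ mu (i0-1) * (A*L) := mul_nonneg mu0 (mul_nonneg hA0.le hL0)
        have n2 : 0 ≤ lam (i0-1) * (B*R) := mul_nonneg lam0 (mul_nonneg hB0.le hR0)
        exact interior_contra (lam (i0-1)) (mu (i0-1)) (A*L) (B*R) M hM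
          (by linear_combination hstep) hMsum hPsum hQsum n1 n2
  intro i h2 hn1
  have hmx := hmax i (Finset.mem_Icc.mpr ⟨h2, hn1⟩)
  show |e i| ≤ c i
  linarith


/-- Proposition 1 of the paper: distance between the pieces of two cubic splines
interpolating the same data but with different endpoint derivative values. -/
theorem spline_pieces_distance_bound
    (n : ℕ) (hn : 5 ≤ n)
    (x f h m lam mu dF dtF : ℕ → ℝ)
    (hx : ∀ i, 1 ≤ i → i < n → x i < x (i + 1))
    (hh : ∀ i, h i = x (i + 1) - x i)
    (hm : ∀ i, m i = (f (i + 1) - f i) / h i)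
    (hlam : ∀ i, lam i = h (i + 1) / (h i + h (i + 1)))
    (hmu : ∀ i, mu i = h i / (h i + h (i + 1)))
    -- interior derivative values of both splines solve the tridiagonal system
    (hsys : ∀ i, 2 ≤ i → i ≤ n - 1 →
      lam (i - 1) * dF (i - 1) + 2 * dF i + mu (i - 1) * dF (i + 1)
        = 3 * (lam (i - 1) * m (i - 1) + mu (i - 1) * m i))
    (hsyst : ∀ i, 2 ≤ i → i ≤ n - 1 →
      lam (i - 1) * dtF (i - 1) + 2 * dtF i + mu (i - 1) * dtF (i + 1)
        = 3 * (lam (i - 1) * m (i - 1) + mu (i - 1) * m i))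
    -- the pieces of the two splines, in cubic Hermite form
    (P Pt : ℕ → ℝ → ℝ)
    (hP : ∀ i y, P i y = f i + dF i * (y - x i) + ((m i - dF i) / h i) * (y - x i) ^ 2
        + ((dF (i + 1) + dF i - 2 * m i) / (h i) ^ 2) * (y - x i) ^ 2 * (y - x (i + 1)))
    (hPt : ∀ i y, Pt i y = f i + dtF i * (y - x i) + ((m i - dtF i) / h i) * (y - x i) ^ 2
        + ((dtF (i + 1) + dtF i - 2 * m i) / (h i) ^ 2) * (y - x i) ^ 2 * (y - x (i + 1))) :
    ∀ i, 2 ≤ i → i ≤ n - 2 → ∀ y ∈ Set.Icc (x i) (x (i + 1)),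
      |P i y - Pt i y| ≤ 8 * h i *
        (2 ^ (-(i : ℤ)) * lam 1 * |dtF 1 - dF 1|
          + 2 ^ ((i : ℤ) - (n : ℤ)) * mu (n - 2) * |dtF n - dF n|) := by
  have hhp : ∀ j, 1 ≤ j → j < n → 0 < h j := by
    intro j h1 h2
    rw [hh]
    linarith [hx j h1 h2]
  have hlm : ∀ j, 1 ≤ j → j + 2 ≤ n → 0 ≤ lam j ∧ 0 ≤ mu j ∧ lam j + mu j = 1 := by
    intro j h1 h2
    have p1 := hhp j h1 (by omega)
    have p2 := hhp (j+1) (by omega) (by omega)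
    have hs : h j + h (j+1) ≠ 0 := by linarith
    refine ⟨?_, ?_, ?_⟩
    · rw [hlam]; positivity
    · rw [hmu]; positivity
    · rw [hlam, hmu]
      field_simp
      ring
  have heq : ∀ k, 2 ≤ k → k ≤ n - 1 →
      lam (k - 1) * ((fun j => dtF j - dF j) (k - 1)) + 2 * ((fun j => dtF j - dF j) k)
        + mu (k - 1) * ((fun j => dtF j - dF j) (k + 1)) = 0 := by
    intro k a b
    have e1 := hsys k a b
    have e2 := hsyst k a b
    simp only
    nlinarith [e1, e2]
  have key := tridiag_decay n hn lam mu (fun j => dtF j - dF j) hlm heq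
  intro i hi2 hin y hy
  rw [Set.mem_Icc] at hy
  have hb1 : |dtF i - dF i| ≤ (8/3) * ((2:ℝ) ^ (-(i:ℤ)) * (lam 1 * |dtF 1 - dF 1|)
      + (2:ℝ) ^ ((i:ℤ) - (n:ℤ)) * (mu (n - 2) * |dtF n - dF n|)) := key i hi2 (by omega)
  have hb2 := key (i+1) (by omega) (by omega)
  set Ai := (2:ℝ) ^ (-(i:ℤ)) * (lam 1 * |dtF 1 - dF 1|) with hAidef
  set Bi := (2:ℝ) ^ ((i:ℤ) - (n:ℤ)) * (mu (n - 2) * |dtF n - dF n|) with hBidef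
  have hAi0 : 0 ≤ Ai := mul_nonneg (zpow_pos (by norm_num : (0:ℝ) < 2) _).le
    (mul_nonneg (hlm 1 le_rfl (by omega)).1 (abs_nonneg _))
  have hBi0 : 0 ≤ Bi := mul_nonneg (zpow_pos (by norm_num : (0:ℝ) < 2) _).le
    (mul_nonneg (hlm (n-2) (by omega) (by omega)).2.1 (abs_nonneg _))
  have hb2' : |dtF (i+1) - dF (i+1)| ≤ (8/3) * ((1/2) * Ai + 2 * Bi) := by
    refine le_trans hb2 (le_of_eq ?_)
    have c1 : (2:ℝ) ^ (-((i+1:ℕ):ℤ)) = (1/2) * (2:ℝ) ^ (-(i:ℤ)) := by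
      have : ((i+1:ℕ):ℤ) = (i:ℤ) + 1 := by omega
      rw [this, show -((i:ℤ)+1) = (-1) + -(i:ℤ) by ring, zpow_add₀ (two_ne_zero)]
      norm_num
    have c2 : (2:ℝ) ^ (((i+1:ℕ):ℤ) - (n:ℤ)) = 2 * (2:ℝ) ^ ((i:ℤ) - (n:ℤ)) := by
      have : ((i+1:ℕ):ℤ) = (i:ℤ) + 1 := by omega
      rw [this, show (i:ℤ) + 1 - (n:ℤ) = 1 + ((i:ℤ) - (n:ℤ)) by ring,
        zpow_add₀ (two_ne_zero), zpow_one]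
    rw [c1, c2, hAidef, hBidef]
    ring
  clear hb2 key heq hsys hsyst hm
  -- pointwise bound on the piece difference
  have hipos : 0 < h i := hhp i (by omega) (by omega)
  have hne : x (i+1) - x i ≠ 0 := by
    have := hhp i (by omega) (by omega)
    rw [hh] at this
    linarith
  have ht0 : 0 ≤ y - x i := by linarith [hy.1]
  have hth : y - x i ≤ h i := by rw [hh]; linarith [hy.2]
  have hD : P i y - Pt i y =
      -(dtF i - dF i) * ((y - x i) * (h i - (y - x i)) / h i)
      + ((dtF (i+1) - dF (i+1)) + (dtF i - dF i))
        * ((y - x i)^2 * (h i - (y - x i)) / (h i)^2) := by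
    rw [hP, hPt, hh]
    field_simp
    ring
  have hu0 : 0 ≤ (y - x i) * (h i - (y - x i)) / h i :=
    div_nonneg (mul_nonneg ht0 (by linarith)) hipos.le
  have hv0 : 0 ≤ (y - x i)^2 * (h i - (y - x i)) / (h i)^2 :=
    div_nonneg (mul_nonneg (sq_nonneg _) (by linarith)) (sq_nonneg _)
  have hu4 : (y - x i) * (h i - (y - x i)) / h i ≤ h i / 4 := by
    rw [div_le_iff₀ hipos]
    nlinarith [sq_nonneg (h i - 2 * (y - x i))]
  have hv4 : (y - x i)^2 * (h i - (y - x i)) / (h i)^2 ≤ h i / 4 := by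
    rw [div_le_iff₀ (by positivity : (0:ℝ) < (h i)^2)]
    nlinarith [mul_nonneg ht0 (sq_nonneg (h i - 2 * (y - x i))),
      mul_nonneg (mul_nonneg hipos.le hipos.le) (sub_nonneg.mpr hth)]
  have habsD : |P i y - Pt i y| ≤ |dtF i - dF i| * (h i / 4)
      + (|dtF (i+1) - dF (i+1)| + |dtF i - dF i|) * (h i / 4) := by
    rw [hD]
    refine le_trans (abs_add_le _ _) ?_
    rw [abs_mul, abs_mul, abs_neg, abs_of_nonneg hu0, abs_of_nonneg hv0]
    have t1 : |dtF i - dF i| * ((y - x i) * (h i - (y - x i)) / h i)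
        ≤ |dtF i - dF i| * (h i / 4) :=
      mul_le_mul_of_nonneg_left hu4 (abs_nonneg _)
    have t2 : |dtF (i+1) - dF (i+1) + (dtF i - dF i)|
        * ((y - x i)^2 * (h i - (y - x i)) / (h i)^2)
        ≤ (|dtF (i+1) - dF (i+1)| + |dtF i - dF i|) * (h i / 4) := by
      apply mul_le_mul (abs_add_le _ _) hv4 hv0
      positivity
    exact add_le_add t1 t2
  have hfin : |dtF i - dF i| * (h i / 4)
      + (|dtF (i+1) - dF (i+1)| + |dtF i - dF i|) * (h i / 4)
      ≤ 8 * h i * (Ai + Bi) := by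
    have k1 : |dtF i - dF i| * (h i / 4) ≤ (8/3) * (Ai + Bi) * (h i / 4) :=
      mul_le_mul_of_nonneg_right hb1 (div_nonneg hipos.le (by norm_num))
    have k2 : (|dtF (i+1) - dF (i+1)| + |dtF i - dF i|) * (h i / 4)
        ≤ ((8/3) * ((1/2) * Ai + 2 * Bi) + (8/3) * (Ai + Bi)) * (h i / 4) :=
      mul_le_mul_of_nonneg_right (by linarith only [hb1, hb2']) (div_nonneg hipos.le (by norm_num))
    have k3 : 0 ≤ h i * Ai := mul_nonneg hipos.le hAi0
    have k4 : 0 ≤ h i * Bi := mul_nonneg hipos.le hBi0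
    linarith only [k1, k2, k3, k4]
  calc |P i y - Pt i y| ≤ _ := habsD
    _ ≤ 8 * h i * (Ai + Bi) := hfin
    _ = 8 * h i * (2 ^ (-(i : ℤ)) * lam 1 * |dtF 1 - dF 1|
          + 2 ^ ((i : ℤ) - (n : ℤ)) * mu (n - 2) * |dtF n - dF n|) := by
        rw [hAidef, hBidef]; ring
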